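/- Generic robust characterization of C-rationalizability: if the finite two-player game G is generic (for every player and every justifiable action there is a conjecture making that action the unique best reply), then for every player i, every order n ≥ 1, and every level k ≥ 1, the union over all anchors p and all full-support level distributions f of the n-C-rationalizable actions of type θ_{i,k} equals R^1_i, the set of justifiable actions. -/
import Mathlib


open Finset

/-- A probability distribution (as weights) on a finite set. -/
def IsDist {B : Type} [Fintype B] (ν : B → ℝ) : Prop :=
  (∀ b, 0 ≤ ν b) ∧ ∑ b, ν b = 1

/-- `a` is a best reply to the conjecture `ν` (weights on the co-player's actions). -/
def isBR {A B : Type} [Fintype A] [Fintype B] (u : A → B → ℝ) (ν : B → ℝ) (a : A) : Prop :=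
  ∀ a' : A, ∑ b, ν b * u a' b ≤ ∑ b, ν b * u a b

/-- `a` is strictly dominated by some mixed action. -/
def Dominated {A B : Type} [Fintype A] [Fintype B] (u : A → B → ℝ) (a : A) : Prop :=
  ∃ α : A → ℝ, IsDist α ∧ ∀ b : B, (∑ a', α a' * u a' b) > u a b

/-- One step of iterated elimination: best replies (within `S`) to conjectures on `T`. -/
def BRstep {A B : Type} [Fintype A] [Fintype B] (u : A → B → ℝ) (S : Set A) (T : Set B) :
    Set A :=
  {a | a ∈ S ∧ ∃ ν : B → ℝ, IsDist ν ∧ (∀ b, ν b ≠ 0 → b ∈ T) ∧ isBR u ν a}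

/-- `n`-rationalizability in the complete-information game. -/
def Rseq {A B : Type} [Fintype A] [Fintype B] (u1 : A → B → ℝ) (u2 : B → A → ℝ) :
    ℕ → Set A × Set B
  | 0 => (Set.univ, Set.univ)
  | n + 1 =>
    (BRstep u1 (Rseq u1 u2 n).1 (Rseq u1 u2 n).2,
     BRstep u2 (Rseq u1 u2 n).2 (Rseq u1 u2 n).1)

/-- Best replies to conjectures concentrated on `T`. -/
def Lstep {A B : Type} [Fintype A] [Fintype B] (u : A → B → ℝ) (T : Set B) : Set A :=
  {a | ∃ ν : B → ℝ, IsDist ν ∧ (∀ b, ν b ≠ 0 → b ∈ T) ∧ isBR u ν a}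

/-- The classic level-k solution under anchor `(p1, p2)`; `Lk … k` is level-`k` behavior
(meaningful for `k ≥ 1`). -/
def Lk {A B : Type} [Fintype A] [Fintype B] (u1 : A → B → ℝ) (u2 : B → A → ℝ)
    (p1 : A → ℝ) (p2 : B → ℝ) : ℕ → Set A × Set B
  | 0 => (Set.univ, Set.univ)
  | 1 => ({a | isBR u1 p2 a}, {b | isBR u2 p1 b})
  | k + 2 =>
    (Lstep u1 (Lk u1 u2 p1 p2 (k + 1)).2,
     Lstep u2 (Lk u1 u2 p1 p2 (k + 1)).1)

/-- A Ĝ-conjecture over the co-player's (level-type, action) pairs: a finitely supported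
type-marginal together with conditional action distributions. -/
structure GConj (B : Type) [Fintype B] where
  m : ℕ →₀ ℝ
  m_nonneg : ∀ t, 0 ≤ m t
  m_sum : (m.sum fun _ w => w) = 1
  cond : ℕ → B → ℝ
  cond_dist : ∀ t, IsDist (cond t)

/-- Marginal of a Ĝ-conjecture on the co-player's actions. -/
noncomputable def margAct {B : Type} [Fintype B] (μ : GConj B) : B → ℝ :=
  fun b => μ.m.sum fun t w => w * μ.cond t b

/-- (K1): conditional on the co-player being of type 0 (if deemed possible),
play follows the anchor `q`. -/
def K1 {B : Type} [Fintype B] (q : B → ℝ) (μ : GConj B) : Prop :=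
  μ.m 0 ≠ 0 → μ.cond 0 = q

/-- (K2): only co-player types strictly below `k` are deemed possible. -/
def K2 {B : Type} [Fintype B] (k : ℕ) (μ : GConj B) : Prop :=
  ∀ t, μ.m t ≠ 0 → t < k

/-- (KL): only the co-player type `k - 1` is deemed possible. -/
def KL {B : Type} [Fintype B] (k : ℕ) (μ : GConj B) : Prop :=
  ∀ t, μ.m t ≠ 0 → t = k - 1

/-- Truncation `f^k` of the level distribution `f` at `k`. -/
noncomputable def ftrunc (f : ℕ → ℝ) (k t : ℕ) : ℝ :=
  f t / ∑ t' ∈ Finset.range k, f t'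

/-- (KC): the type-marginal equals the truncation of `f` at `k`. -/
def KC {B : Type} [Fintype B] (f : ℕ → ℝ) (k : ℕ) (μ : GConj B) : Prop :=
  ∀ t < k, μ.m t = ftrunc f k t

/-- A full-support level distribution on ℕ. -/
def FullDist (f : ℕ → ℝ) : Prop :=
  (∀ t, 0 < f t) ∧ HasSum f 1

/-- One step of Δ-rationalizability for one player, under belief restrictions `Δ`
(type-0 pairs always survive, since type-0 payoffs are constant). -/
def Dstep {A B : Type} [Fintype A] [Fintype B] (u : A → B → ℝ)
    (Δ : ℕ → GConj B → Prop) (S : Set (ℕ × A)) (T : Set (ℕ × B)) : Set (ℕ × A) :=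
  {x | x ∈ S ∧ (x.1 = 0 ∨ ∃ μ : GConj B, Δ x.1 μ ∧
      (∀ t b, μ.m t ≠ 0 → μ.cond t b ≠ 0 → (t, b) ∈ T) ∧ isBR u (margAct μ) x.2)}

/-- Δ-rationalizability in the derived game with payoff uncertainty. -/
def DeltaRat {A B : Type} [Fintype A] [Fintype B] (u1 : A → B → ℝ) (u2 : B → A → ℝ)
    (Δ1 : ℕ → GConj B → Prop) (Δ2 : ℕ → GConj A → Prop) :
    ℕ → Set (ℕ × A) × Set (ℕ × B)
  | 0 => (Set.univ, Set.univ)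
  | n + 1 =>
    (Dstep u1 Δ1 (DeltaRat u1 u2 Δ1 Δ2 n).1 (DeltaRat u1 u2 Δ1 Δ2 n).2,
     Dstep u2 Δ2 (DeltaRat u1 u2 Δ1 Δ2 n).2 (DeltaRat u1 u2 Δ1 Δ2 n).1)

/-- Belief restrictions for downward rationalizability: (K1) and (K2). -/
def DownR {B : Type} [Fintype B] (q : B → ℝ) : ℕ → GConj B → Prop :=
  fun k μ => K1 q μ ∧ K2 k μ

/-- Belief restrictions for L-rationalizability: (K1), (K2) and (KL). -/
def LR {B : Type} [Fintype B] (q : B → ℝ) : ℕ → GConj B → Prop :=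
  fun k μ => K1 q μ ∧ K2 k μ ∧ KL k μ

/-- Belief restrictions for C-rationalizability: (K1), (K2) and (KC). -/
def CR {B : Type} [Fintype B] (q : B → ℝ) (f : ℕ → ℝ) : ℕ → GConj B → Prop :=
  fun k μ => K1 q μ ∧ K2 k μ ∧ KC f k μ

section Sets

variable {A B : Type} [Fintype A] [Fintype B]

/-- `n`-downward-rationalizable actions of player 1's type `θ_{1,k}`. -/
def DSet (u1 : A → B → ℝ) (u2 : B → A → ℝ) (p1 : A → ℝ) (p2 : B → ℝ) (n k : ℕ) : Set A :=
  {a | (k, a) ∈ (DeltaRat u1 u2 (DownR p2) (DownR p1) n).1}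

/-- `n`-downward-rationalizable actions of player 2's type `θ_{2,k}`. -/
def DSet2 (u1 : A → B → ℝ) (u2 : B → A → ℝ) (p1 : A → ℝ) (p2 : B → ℝ) (n k : ℕ) : Set B :=
  {b | (k, b) ∈ (DeltaRat u1 u2 (DownR p2) (DownR p1) n).2}

def DSetInf (u1 : A → B → ℝ) (u2 : B → A → ℝ) (p1 : A → ℝ) (p2 : B → ℝ) (k : ℕ) : Set A :=
  ⋂ n, DSet u1 u2 p1 p2 n k

def DSet2Inf (u1 : A → B → ℝ) (u2 : B → A → ℝ) (p1 : A → ℝ) (p2 : B → ℝ) (k : ℕ) : Set B :=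
  ⋂ n, DSet2 u1 u2 p1 p2 n k

/-- `n`-L-rationalizable actions of player 1's type `θ_{1,k}`. -/
def LSet (u1 : A → B → ℝ) (u2 : B → A → ℝ) (p1 : A → ℝ) (p2 : B → ℝ) (n k : ℕ) : Set A :=
  {a | (k, a) ∈ (DeltaRat u1 u2 (LR p2) (LR p1) n).1}

/-- `n`-L-rationalizable actions of player 2's type `θ_{2,k}`. -/
def LSet2 (u1 : A → B → ℝ) (u2 : B → A → ℝ) (p1 : A → ℝ) (p2 : B → ℝ) (n k : ℕ) : Set B :=
  {b | (k, b) ∈ (DeltaRat u1 u2 (LR p2) (LR p1) n).2}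

def LSetInf (u1 : A → B → ℝ) (u2 : B → A → ℝ) (p1 : A → ℝ) (p2 : B → ℝ) (k : ℕ) : Set A :=
  ⋂ n, LSet u1 u2 p1 p2 n k

def LSet2Inf (u1 : A → B → ℝ) (u2 : B → A → ℝ) (p1 : A → ℝ) (p2 : B → ℝ) (k : ℕ) : Set B :=
  ⋂ n, LSet2 u1 u2 p1 p2 n k

/-- `n`-C-rationalizable actions of player 1's type `θ_{1,k}`. -/
def CSet (u1 : A → B → ℝ) (u2 : B → A → ℝ) (p1 : A → ℝ) (p2 : B → ℝ) (f : ℕ → ℝ)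
    (n k : ℕ) : Set A :=
  {a | (k, a) ∈ (DeltaRat u1 u2 (CR p2 f) (CR p1 f) n).1}

/-- `n`-C-rationalizable actions of player 2's type `θ_{2,k}`. -/
def CSet2 (u1 : A → B → ℝ) (u2 : B → A → ℝ) (p1 : A → ℝ) (p2 : B → ℝ) (f : ℕ → ℝ)
    (n k : ℕ) : Set B :=
  {b | (k, b) ∈ (DeltaRat u1 u2 (CR p2 f) (CR p1 f) n).2}

/-- The Cognitive Hierarchy solution: `CHsol … k` is CH level-`k` behavior (`k ≥ 1`). -/
def CHsol (u1 : A → B → ℝ) (u2 : B → A → ℝ) (p1 : A → ℝ) (p2 : B → ℝ) (f : ℕ → ℝ) :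
    ℕ → Set A × Set B
  | 0 => (Set.univ, Set.univ)
  | 1 => ({a | isBR u1 p2 a}, {b | isBR u2 p1 b})
  | k + 2 =>
    ({a | ∃ μ : GConj B, K2 (k + 2) μ ∧ KC f (k + 2) μ ∧ K1 p2 μ ∧
        (∀ t, 0 < t → ∀ _ : t < k + 2, ∀ b, μ.m t ≠ 0 → μ.cond t b ≠ 0 →
          b ∈ (CHsol u1 u2 p1 p2 f t).2) ∧
        isBR u1 (margAct μ) a},
     {b | ∃ μ : GConj A, K2 (k + 2) μ ∧ KC f (k + 2) μ ∧ K1 p1 μ ∧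
        (∀ t, 0 < t → ∀ _ : t < k + 2, ∀ a, μ.m t ≠ 0 → μ.cond t a ≠ 0 →
          a ∈ (CHsol u1 u2 p1 p2 f t).1) ∧
        isBR u2 (margAct μ) b})
  termination_by k => k

end Sets
section Aux
set_option linter.unusedSectionVars false

variable {A B : Type} [Fintype A] [Fintype B] [DecidableEq A] [DecidableEq B]

lemma dirac_isDist (b0 : B) : IsDist (fun b => if b = b0 then (1:ℝ) else 0) := by
  constructor
  · intro b; by_cases h : b = b0 <;> simp [h]
  · simp

lemma isDist_nonempty {ν : B → ℝ} (hν : IsDist ν) : Nonempty B := by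
  by_contra h
  rw [not_nonempty_iff] at h
  have := hν.2
  rw [Finset.univ_eq_empty, Finset.sum_empty] at this
  norm_num at this

lemma zero_mem_deltaRat (u1 : A → B → ℝ) (u2 : B → A → ℝ)
    (Δ1 : ℕ → GConj B → Prop) (Δ2 : ℕ → GConj A → Prop) (n : ℕ) :
    (∀ a : A, ((0:ℕ), a) ∈ (DeltaRat u1 u2 Δ1 Δ2 n).1) ∧
    (∀ b : B, ((0:ℕ), b) ∈ (DeltaRat u1 u2 Δ1 Δ2 n).2) := by
  induction n with
  | zero => exact ⟨fun a => Set.mem_univ _, fun b => Set.mem_univ _⟩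
  | succ n ih => exact ⟨fun a => ⟨ih.1 a, Or.inl rfl⟩, fun b => ⟨ih.2 b, Or.inl rfl⟩⟩

lemma deltaRat_swap (u1 : A → B → ℝ) (u2 : B → A → ℝ)
    (Δ1 : ℕ → GConj B → Prop) (Δ2 : ℕ → GConj A → Prop) (n : ℕ) :
    DeltaRat u2 u1 Δ2 Δ1 n = ((DeltaRat u1 u2 Δ1 Δ2 n).2, (DeltaRat u1 u2 Δ1 Δ2 n).1) := by
  induction n with
  | zero => rfl
  | succ n ih =>
    have e1 : DeltaRat u2 u1 Δ2 Δ1 (n + 1)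
        = (Dstep u2 Δ2 (DeltaRat u2 u1 Δ2 Δ1 n).1 (DeltaRat u2 u1 Δ2 Δ1 n).2,
           Dstep u1 Δ1 (DeltaRat u2 u1 Δ2 Δ1 n).2 (DeltaRat u2 u1 Δ2 Δ1 n).1) := rfl
    have e2 : DeltaRat u1 u2 Δ1 Δ2 (n + 1)
        = (Dstep u1 Δ1 (DeltaRat u1 u2 Δ1 Δ2 n).1 (DeltaRat u1 u2 Δ1 Δ2 n).2,
           Dstep u2 Δ2 (DeltaRat u1 u2 Δ1 Δ2 n).2 (DeltaRat u1 u2 Δ1 Δ2 n).1) := rfl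
    rw [e1, e2, ih]

lemma margAct_isDist (μ : GConj B) : IsDist (margAct μ) := by
  constructor
  · intro b
    refine Finset.sum_nonneg fun t _ => ?_
    exact mul_nonneg (μ.m_nonneg t) ((μ.cond_dist t).1 b)
  · have h1 : ∑ b, margAct μ b = ∑ t ∈ μ.m.support, ∑ b, μ.m t * μ.cond t b :=
      Finset.sum_comm
    rw [h1]
    have h2 : ∀ t ∈ μ.m.support, ∑ b, μ.m t * μ.cond t b = μ.m t := by
      intro t _
      rw [← Finset.mul_sum, (μ.cond_dist t).2, mul_one]
    rw [Finset.sum_congr rfl h2]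
    exact μ.m_sum

lemma pert (u : A → B → ℝ) (ν : B → ℝ) (a : A) (hν : IsDist ν) (hBR : isBR u ν a)
    (huniq : ∀ a', isBR u ν a' → a' = a) :
    ∃ ε : ℝ, 0 < ε ∧ ∀ w : B → ℝ, IsDist w → ∀ c : ℝ, 1 - ε ≤ c → c ≤ 1 →
      isBR u (fun b => c * ν b + (1 - c) * w b) a := by
  haveI hB : Nonempty B := isDist_nonempty hν
  haveI hA : Nonempty A := ⟨a⟩
  set E : A → ℝ := fun a' => ∑ b, ν b * u a' b with hE
  obtain ⟨M, hM0, hM⟩ : ∃ M : ℝ, 0 ≤ M ∧ ∀ a' b, |u a' b| ≤ M := by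
    refine ⟨(Finset.univ : Finset (A × B)).sup'
      Finset.univ_nonempty (fun p => |u p.1 p.2|), ?_, ?_⟩
    · exact le_trans (abs_nonneg (u a (Classical.arbitrary B)))
        (Finset.le_sup' (f := fun p : A × B => |u p.1 p.2|)
          (Finset.mem_univ (a, Classical.arbitrary B)))
    · intro a' b
      exact Finset.le_sup' (f := fun p : A × B => |u p.1 p.2|) (Finset.mem_univ (a', b))
  have hW : ∀ (w : B → ℝ), IsDist w → ∀ a', |∑ b, w b * u a' b| ≤ M := by
    intro w hw a'
    calc |∑ b, w b * u a' b| ≤ ∑ b, |w b * u a' b| := Finset.abs_sum_le_sum_abs _ _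
      _ ≤ ∑ b, w b * M := by
          refine Finset.sum_le_sum fun b _ => ?_
          rw [abs_mul, abs_of_nonneg (hw.1 b)]
          exact mul_le_mul_of_nonneg_left (hM a' b) (hw.1 b)
      _ = M := by rw [← Finset.sum_mul, hw.2, one_mul]
  obtain ⟨δ, hδ0, hδ⟩ : ∃ δ : ℝ, 0 < δ ∧ ∀ a', a' ≠ a → δ ≤ E a - E a' := by
    by_cases hall : ∀ a', a' = a
    · exact ⟨1, one_pos, fun a' h => absurd (hall a') h⟩
    · push_neg at hall
      obtain ⟨a₀, ha₀⟩ := hall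
      set s := (Finset.univ.erase a).image fun a' => E a - E a' with hs
      have hne : s.Nonempty :=
        ⟨E a - E a₀, Finset.mem_image.2 ⟨a₀, Finset.mem_erase.2 ⟨ha₀, Finset.mem_univ _⟩, rfl⟩⟩
      refine ⟨s.min' hne, ?_, fun a' h => Finset.min'_le _ _
        (Finset.mem_image.2 ⟨a', Finset.mem_erase.2 ⟨h, Finset.mem_univ _⟩, rfl⟩)⟩
      obtain ⟨a₁, ha₁, hval⟩ := Finset.mem_image.1 (Finset.min'_mem _ hne)
      rw [← hval]
      have h1 : E a₁ ≤ E a := hBR a₁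
      rcases lt_or_eq_of_le h1 with h | h
      · linarith
      · exact absurd (huniq a₁ (fun a'' => le_of_le_of_eq (hBR a'') h.symm))
          (Finset.mem_erase.1 ha₁).1
  have hden : (0:ℝ) < 2 * M + 2 * δ := by linarith
  refine ⟨δ / (2 * M + 2 * δ), by positivity, ?_⟩
  set ε : ℝ := δ / (2 * M + 2 * δ) with hεdef'
  have hε0 : 0 < ε := by positivity
  have hεdef : ε * (2 * M + 2 * δ) = δ := div_mul_cancel₀ _ hden.ne'
  have hεhalf : ε ≤ 1 / 2 := by
    rw [hεdef', div_le_iff₀ hden]; nlinarith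
  intro w hw c hc1 hc2 a'
  set W : A → ℝ := fun a' => ∑ b, w b * u a' b with hWdef
  have hexp : ∀ a'', ∑ b, (c * ν b + (1 - c) * w b) * u a'' b
      = c * E a'' + (1 - c) * W a'' := by
    intro a''
    rw [hE, hWdef]
    simp only [Finset.mul_sum, ← Finset.sum_add_distrib]
    exact Finset.sum_congr rfl fun b _ => by ring
  show ∑ b, (c * ν b + (1 - c) * w b) * u a' b ≤ ∑ b, (c * ν b + (1 - c) * w b) * u a b
  rw [hexp, hexp]
  by_cases ha' : a' = a
  · subst ha'; exact le_rfl
  · have hgap := hδ a' ha'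
    have hc0 : (0:ℝ) ≤ c := by linarith
    have hεle : ε * (2 * M) ≤ (1 - ε) * δ := by nlinarith [mul_nonneg hε0.le hδ0.le]
    have hWa := abs_le.1 (hW w hw a)
    have hWa' := abs_le.1 (hW w hw a')
    have key : (1 - c) * (W a' - W a) ≤ c * (E a - E a') := by
      have t1 : (1 - c) * (W a' - W a) ≤ (1 - c) * (2 * M) :=
        mul_le_mul_of_nonneg_left (by linarith [hWa.1, hWa'.2]) (by linarith)
      have t2 : (1 - c) * (2 * M) ≤ ε * (2 * M) :=
        mul_le_mul_of_nonneg_right (by linarith) (by linarith)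
      have t3 : (1 - ε) * δ ≤ c * δ := mul_le_mul_of_nonneg_right hc1 hδ0.le
      have t4 : c * δ ≤ c * (E a - E a') := mul_le_mul_of_nonneg_left hgap hc0
      linarith
    nlinarith [key]

end Aux
section Aux2
set_option linter.unusedSectionVars false

variable {A B : Type} [Fintype A] [Fintype B] [DecidableEq A] [DecidableEq B]

/-- truncated level marginal as a finsupp -/
noncomputable def trm (f : ℕ → ℝ) (k : ℕ) : ℕ →₀ ℝ :=
  Finsupp.onFinset (Finset.range k) (fun s => if s < k then ftrunc f k s else 0)
    (fun s hs => Finset.mem_range.2 (by by_contra h; exact hs (if_neg h)))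

/-- conditional system: anchor at type 0, point mass on `b0` otherwise -/
def condC (ν : B → ℝ) (b0 : B) : ℕ → B → ℝ :=
  fun s => if s = 0 then ν else fun b => if b = b0 then (1:ℝ) else 0

noncomputable def mkConj (ν : B → ℝ) (b0 : B) (f : ℕ → ℝ) (k : ℕ)
    (hν : IsDist ν) (hnn : ∀ s, 0 ≤ ftrunc f k s)
    (hsum1 : ∑ s ∈ Finset.range k, ftrunc f k s = 1) : GConj B where
  m := trm f k
  m_nonneg := fun t => by
    show (0:ℝ) ≤ (if t < k then ftrunc f k t else 0)
    split
    · exact hnn t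
    · exact le_rfl
  m_sum := by
    show (Finsupp.onFinset _ _ _).sum (fun _ w => w) = 1
    rw [Finsupp.onFinset_sum _ (fun _ => rfl),
      Finset.sum_congr rfl (fun s hs => if_pos (Finset.mem_range.1 hs))]
    exact hsum1
  cond := condC ν b0
  cond_dist := fun s => by
    show IsDist (if s = 0 then ν else fun b => if b = b0 then (1:ℝ) else 0)
    split
    · exact hν
    · exact dirac_isDist b0

lemma mkConj_m (ν : B → ℝ) (b0 : B) (f : ℕ → ℝ) (k : ℕ) (hν hnn hsum1) (t : ℕ) :
    (mkConj ν b0 f k hν hnn hsum1).m t = if t < k then ftrunc f k t else 0 := rfl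

lemma mkConj_cond (ν : B → ℝ) (b0 : B) (f : ℕ → ℝ) (k : ℕ) (hν hnn hsum1) :
    (mkConj ν b0 f k hν hnn hsum1).cond = condC ν b0 := rfl

lemma mkConj_marg (ν : B → ℝ) (b0 : B) (f : ℕ → ℝ) (k : ℕ) (hν hnn hsum1)
    (hk : 1 ≤ k) :
    margAct (mkConj ν b0 f k hν hnn hsum1)
      = fun b => ftrunc f k 0 * ν b
          + (1 - ftrunc f k 0) * (if b = b0 then (1:ℝ) else 0) := by
  have h0k : 0 ∈ Finset.range k := Finset.mem_range.2 hk
  funext b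
  show (trm f k).sum (fun t w => w * condC ν b0 t b) = _
  rw [show trm f k = Finsupp.onFinset (Finset.range k)
      (fun s => if s < k then ftrunc f k s else 0) _ from rfl]
  rw [Finsupp.onFinset_sum _ (fun t => zero_mul (condC ν b0 t b))]
  rw [Finset.sum_congr rfl
    (fun s hs => by rw [if_pos (Finset.mem_range.1 hs)])]
  rw [← Finset.sum_erase_add _ _ h0k]
  have he : ∀ s ∈ (Finset.range k).erase 0,
      ftrunc f k s * condC ν b0 s b = ftrunc f k s * (if b = b0 then (1:ℝ) else 0) := by
    intro s hs
    simp only [condC, if_neg (Finset.mem_erase.1 hs).1]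
  rw [Finset.sum_congr rfl he, ← Finset.sum_mul, Finset.sum_erase_eq_sub h0k]
  have hm1 : ∑ s ∈ Finset.range k, ftrunc f k s = 1 := hsum1
  rw [hm1]
  rw [show condC ν b0 0 b = ν b from rfl]
  ring

lemma surv (u : A → B → ℝ) (ν : B → ℝ) (hν : IsDist ν) (a : A) (b0 : B)
    (f : ℕ → ℝ) (hf : FullDist f)
    (hε : ∀ c : ℝ, f 0 ≤ c → c ≤ 1 →
      isBR u (fun b => c * ν b + (1 - c) * (if b = b0 then (1:ℝ) else 0)) a)
    (k : ℕ) (hk : 1 ≤ k) (T : Set (ℕ × B))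
    (hT0 : ∀ b, ((0:ℕ), b) ∈ T) (hTb : ∀ t, 1 ≤ t → t < k → (t, b0) ∈ T) :
    ∃ μ : GConj B, CR ν f k μ ∧ (∀ t b, μ.m t ≠ 0 → μ.cond t b ≠ 0 → (t, b) ∈ T) ∧
      isBR u (margAct μ) a := by
  have h0k : 0 ∈ Finset.range k := Finset.mem_range.2 hk
  have hS : 0 < ∑ s ∈ Finset.range k, f s :=
    Finset.sum_pos (fun s _ => hf.1 s) ⟨0, h0k⟩
  have hS1 : ∑ s ∈ Finset.range k, f s ≤ 1 :=
    sum_le_hasSum _ (fun s _ => (hf.1 s).le) hf.2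
  have htr_nonneg : ∀ s, 0 ≤ ftrunc f k s := fun s => div_nonneg (hf.1 s).le hS.le
  have hsum1 : ∑ s ∈ Finset.range k, ftrunc f k s = 1 := by
    simp only [ftrunc]
    rw [← Finset.sum_div, div_self hS.ne']
  have hc1 : f 0 ≤ ftrunc f k 0 := by
    rw [ftrunc, le_div_iff₀ hS]
    calc f 0 * ∑ s ∈ Finset.range k, f s ≤ f 0 * 1 :=
          mul_le_mul_of_nonneg_left hS1 (hf.1 0).le
      _ = f 0 := mul_one _
  have hc2 : ftrunc f k 0 ≤ 1 := by
    rw [ftrunc, div_le_one hS]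
    exact Finset.single_le_sum (fun s _ => (hf.1 s).le) h0k
  refine ⟨mkConj ν b0 f k hν htr_nonneg hsum1, ⟨?_, ?_, ?_⟩, ?_, ?_⟩
  · intro _
    show condC ν b0 0 = ν
    simp [condC]
  · intro t ht
    rw [mkConj_m] at ht
    by_contra h
    exact ht (if_neg h)
  · intro t htk
    rw [mkConj_m]
    exact if_pos htk
  · intro t b hm hcnd
    rw [mkConj_m] at hm
    have htk : t < k := by by_contra h; exact hm (if_neg h)
    by_cases h0 : t = 0
    · subst h0; exact hT0 b
    · rw [mkConj_cond] at hcnd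
      have hcnd' : (if b = b0 then (1:ℝ) else 0) ≠ 0 := by
        simpa [condC, h0] using hcnd
      have : b = b0 := by by_contra h; exact hcnd' (if_neg h)
      subst this
      exact hTb t (Nat.one_le_iff_ne_zero.2 h0) htk
  · rw [mkConj_marg ν b0 f k hν htr_nonneg hsum1 hk]
    exact hε _ hc1 hc2

end Aux2
section Aux3
set_option linter.unusedSectionVars false

variable {A B : Type} [Fintype A] [Fintype B] [DecidableEq A] [DecidableEq B]

lemma key (u1 : A → B → ℝ) (u2 : B → A → ℝ)
    (a : A) (ν : B → ℝ) (hν : IsDist ν) (hBR : isBR u1 ν a)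
    (huniq : ∀ a', isBR u1 ν a' → a' = a)
    (b0 : B) (ν2 : A → ℝ) (hν2 : IsDist ν2) (hBR2 : isBR u2 ν2 b0)
    (huniq2 : ∀ b', isBR u2 ν2 b' → b' = b0) :
    ∃ f : ℕ → ℝ, FullDist f ∧ ∀ n k, 1 ≤ k →
      ((k, a) ∈ (DeltaRat u1 u2 (CR ν f) (CR ν2 f) n).1 ∧
       (k, b0) ∈ (DeltaRat u1 u2 (CR ν f) (CR ν2 f) n).2) := by
  obtain ⟨ε1, hε1, hp1⟩ := pert u1 ν a hν hBR huniq
  obtain ⟨ε2, hε2, hp2⟩ := pert u2 ν2 b0 hν2 hBR2 huniq2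
  set r : ℝ := min (min ε1 ε2) 1 / 2 with hr
  have hr0 : 0 < r := by
    apply div_pos _ two_pos
    exact lt_min (lt_min hε1 hε2) one_pos
  have hr1 : r < 1 := by
    rw [hr, div_lt_iff₀ two_pos]
    have : min (min ε1 ε2) 1 ≤ 1 := min_le_right _ _
    linarith
  have hrε1 : r ≤ ε1 := by
    have h1 : min (min ε1 ε2) 1 ≤ ε1 := le_trans (min_le_left _ _) (min_le_left _ _)
    rw [hr]; linarith
  have hrε2 : r ≤ ε2 := by
    have h1 : min (min ε1 ε2) 1 ≤ ε2 := le_trans (min_le_left _ _) (min_le_right _ _)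
    rw [hr]; linarith
  set f : ℕ → ℝ := fun t => (1 - r) * r ^ t with hfdef
  have hf : FullDist f := by
    constructor
    · intro t; exact mul_pos (by linarith) (pow_pos hr0 t)
    · have h := (hasSum_geometric_of_lt_one hr0.le hr1).mul_left (1 - r)
      rwa [mul_inv_cancel₀ (by linarith : (1:ℝ) - r ≠ 0)] at h
  have hf0 : f 0 = 1 - r := by rw [hfdef]; simp
  have hεa : ∀ c : ℝ, f 0 ≤ c → c ≤ 1 →
      isBR u1 (fun b => c * ν b + (1 - c) * (if b = b0 then (1:ℝ) else 0)) a := by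
    intro c h1 h2
    exact hp1 _ (dirac_isDist b0) c (by rw [hf0] at h1; linarith) h2
  have hεb : ∀ c : ℝ, f 0 ≤ c → c ≤ 1 →
      isBR u2 (fun a' => c * ν2 a' + (1 - c) * (if a' = a then (1:ℝ) else 0)) b0 := by
    intro c h1 h2
    exact hp2 _ (dirac_isDist a) c (by rw [hf0] at h1; linarith) h2
  refine ⟨f, hf, ?_⟩
  intro n
  induction n with
  | zero => exact fun k _ => ⟨Set.mem_univ _, Set.mem_univ _⟩
  | succ n ih =>
    intro k hk
    constructor
    · refine ⟨(ih k hk).1, Or.inr ?_⟩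
      obtain ⟨μ, hCR, hsupp, hbr⟩ := surv u1 ν hν a b0 f hf hεa k hk
        (DeltaRat u1 u2 (CR ν f) (CR ν2 f) n).2
        (fun b => (zero_mem_deltaRat u1 u2 (CR ν f) (CR ν2 f) n).2 b)
        (fun t h1 _ => (ih t h1).2)
      exact ⟨μ, hCR, hsupp, hbr⟩
    · refine ⟨(ih k hk).2, Or.inr ?_⟩
      obtain ⟨μ, hCR, hsupp, hbr⟩ := surv u2 ν2 hν2 b0 a f hf hεb k hk
        (DeltaRat u1 u2 (CR ν f) (CR ν2 f) n).1
        (fun a' => (zero_mem_deltaRat u1 u2 (CR ν f) (CR ν2 f) n).1 a')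
        (fun t h1 _ => (ih t h1).1)
      exact ⟨μ, hCR, hsupp, hbr⟩

lemma easy (u1 : A → B → ℝ) (u2 : B → A → ℝ) (Δ1 : ℕ → GConj B → Prop)
    (Δ2 : ℕ → GConj A → Prop) (n k : ℕ) (hk : k ≠ 0) (a : A)
    (h : (k, a) ∈ (DeltaRat u1 u2 Δ1 Δ2 (n + 1)).1) :
    ∃ ν : B → ℝ, IsDist ν ∧ isBR u1 ν a := by
  obtain ⟨-, h2⟩ := h
  rcases h2 with h0 | ⟨μ, -, -, hbr⟩
  · exact absurd h0 hk
  · exact ⟨margAct μ, margAct_isDist μ, hbr⟩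

lemma exists_just (u2 : B → A → ℝ) [Nonempty A] [Nonempty B] :
    ∃ (b : B) (ν : A → ℝ), IsDist ν ∧ isBR u2 ν b := by
  set a0 := Classical.arbitrary A
  obtain ⟨b, -, hb⟩ := Finset.exists_max_image Finset.univ
    (fun b => ∑ a', (if a' = a0 then (1:ℝ) else 0) * u2 b a') Finset.univ_nonempty
  exact ⟨b, _, dirac_isDist a0, fun b' => hb b' (Finset.mem_univ _)⟩

lemma main_one (u1 : A → B → ℝ) (u2 : B → A → ℝ)
    (hgen1 : ∀ a ∈ (Rseq u1 u2 1).1, ∃ ν : B → ℝ, IsDist ν ∧ isBR u1 ν a ∧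
      ∀ a', isBR u1 ν a' → a' = a)
    (hgen2 : ∀ b ∈ (Rseq u1 u2 1).2, ∃ ν : A → ℝ, IsDist ν ∧ isBR u2 ν b ∧
      ∀ b', isBR u2 ν b' → b' = b)
    (n : ℕ) (hn : 1 ≤ n) (k : ℕ) (hk : 1 ≤ k) :
    {a : A | ∃ p1 : A → ℝ, ∃ p2 : B → ℝ, ∃ f : ℕ → ℝ,
        IsDist p1 ∧ IsDist p2 ∧ FullDist f ∧ a ∈ CSet u1 u2 p1 p2 f n k}
      = (Rseq u1 u2 1).1 := by
  ext a
  simp only [Set.mem_setOf_eq]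
  constructor
  · rintro ⟨p1, p2, f, hp1, hp2, hf, hmem⟩
    obtain ⟨m, rfl⟩ : ∃ m, n = m + 1 := ⟨n - 1, (Nat.succ_pred_eq_of_pos hn).symm⟩
    obtain ⟨ν', hν', hbr⟩ := easy u1 u2 (CR p2 f) (CR p1 f) m k
      (Nat.one_le_iff_ne_zero.1 hk) a hmem
    exact ⟨Set.mem_univ a, ν', hν', fun b _ => Set.mem_univ b, hbr⟩
  · intro ha
    obtain ⟨ν, hν, hBR, huniq⟩ := hgen1 a ha
    haveI : Nonempty B := isDist_nonempty hν
    haveI : Nonempty A := ⟨a⟩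
    obtain ⟨b1, ν0, hν0, hbr0⟩ := exists_just u2
    have hb1 : b1 ∈ (Rseq u1 u2 1).2 :=
      ⟨Set.mem_univ b1, ν0, hν0, fun a' _ => Set.mem_univ a', hbr0⟩
    obtain ⟨ν2, hν2, hBR2, huniq2⟩ := hgen2 b1 hb1
    obtain ⟨f, hf, hmem⟩ := key u1 u2 a ν hν hBR huniq b1 ν2 hν2 hBR2 huniq2
    exact ⟨ν2, ν, f, hν2, hν, hf, (hmem n k hk).1⟩

lemma cset2_eq (u1 : A → B → ℝ) (u2 : B → A → ℝ) (p1 : A → ℝ) (p2 : B → ℝ)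
    (f : ℕ → ℝ) (n k : ℕ) :
    CSet2 u1 u2 p1 p2 f n k = CSet u2 u1 p2 p1 f n k := by
  ext b
  show (k, b) ∈ (DeltaRat u1 u2 (CR p2 f) (CR p1 f) n).2
    ↔ (k, b) ∈ (DeltaRat u2 u1 (CR p1 f) (CR p2 f) n).1
  rw [deltaRat_swap u1 u2 (CR p2 f) (CR p1 f) n]

end Aux3

/-- generic robust characterization of C-rationalizability: in a generic
game, the union over all anchors and all full-support level distributions of the
`n`-C-rationalizable actions of type `θ_{i,k}` equals the justifiable actions. -/
theorem generic_robust_C_characterization {A B : Type} [Fintype A] [Fintype B]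
    (u1 : A → B → ℝ) (u2 : B → A → ℝ)
    (hgen1 : ∀ a ∈ (Rseq u1 u2 1).1, ∃ ν : B → ℝ, IsDist ν ∧ isBR u1 ν a ∧
      ∀ a', isBR u1 ν a' → a' = a)
    (hgen2 : ∀ b ∈ (Rseq u1 u2 1).2, ∃ ν : A → ℝ, IsDist ν ∧ isBR u2 ν b ∧
      ∀ b', isBR u2 ν b' → b' = b)
    (n : ℕ) (hn : 1 ≤ n) (k : ℕ) (hk : 1 ≤ k) :
    {a : A | ∃ p1 : A → ℝ, ∃ p2 : B → ℝ, ∃ f : ℕ → ℝ,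
        IsDist p1 ∧ IsDist p2 ∧ FullDist f ∧ a ∈ CSet u1 u2 p1 p2 f n k}
      = (Rseq u1 u2 1).1 ∧
    {b : B | ∃ p1 : A → ℝ, ∃ p2 : B → ℝ, ∃ f : ℕ → ℝ,
        IsDist p1 ∧ IsDist p2 ∧ FullDist f ∧ b ∈ CSet2 u1 u2 p1 p2 f n k}
      = (Rseq u1 u2 1).2 := by
  classical
  constructor
  · exact main_one u1 u2 hgen1 hgen2 n hn k hk
  · have h2 := main_one u2 u1 hgen2 hgen1 n hn k hk
    calc {b : B | ∃ p1 : A → ℝ, ∃ p2 : B → ℝ, ∃ f : ℕ → ℝ,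
            IsDist p1 ∧ IsDist p2 ∧ FullDist f ∧ b ∈ CSet2 u1 u2 p1 p2 f n k}
        = {b : B | ∃ p1 : B → ℝ, ∃ p2 : A → ℝ, ∃ f : ℕ → ℝ,
            IsDist p1 ∧ IsDist p2 ∧ FullDist f ∧ b ∈ CSet u2 u1 p1 p2 f n k} := by
          ext b
          simp only [Set.mem_setOf_eq]
          constructor
          · rintro ⟨p1, p2, f, h1, hp2, h3, h4⟩
            exact ⟨p2, p1, f, hp2, h1, h3, (cset2_eq u1 u2 p1 p2 f n k) ▸ h4⟩
          · rintro ⟨p1, p2, f, h1, hp2, h3, h4⟩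
            exact ⟨p2, p1, f, hp2, h1, h3, (cset2_eq u1 u2 p2 p1 f n k).symm ▸ h4⟩
      _ = (Rseq u2 u1 1).1 := h2
      _ = (Rseq u1 u2 1).2 := rfl
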